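/- If y_1, ..., y_n are real numbers in [0,1] with y_1 + ... + y_n = n - 1, then y_1 + ... + y_n ≥ y_1² + ... + y_n² + 2·y_1·y_2···y_n. -/

import Mathlib

open Finset

lemma aux_prod_bound {ι : Type*} [DecidableEq ι] (s : Finset ι) (x : ι → ℝ)
    (h0 : ∀ i ∈ s, 0 ≤ x i) (h1 : ∀ i ∈ s, x i ≤ 1) :
    ∏ i ∈ s, (1 - x i) ≤
      1 - ∑ i ∈ s, x i + ((∑ i ∈ s, x i) ^ 2 - ∑ i ∈ s, (x i) ^ 2) / 2 := by
  induction s using Finset.induction_on with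
  | empty => simp
  | @insert a s ha ih =>
    rw [Finset.prod_insert ha, Finset.sum_insert ha, Finset.sum_insert ha]
    have h0' : ∀ i ∈ s, 0 ≤ x i := fun i hi => h0 i (Finset.mem_insert_of_mem hi)
    have h1' : ∀ i ∈ s, x i ≤ 1 := fun i hi => h1 i (Finset.mem_insert_of_mem hi)
    have hIH := ih h0' h1'
    have ha0 : 0 ≤ x a := h0 a (Finset.mem_insert_self a s)
    have ha1 : x a ≤ 1 := h1 a (Finset.mem_insert_self a s)
    have hQ : ∑ i ∈ s, (x i) ^ 2 ≤ (∑ i ∈ s, x i) ^ 2 :=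
      Finset.sum_sq_le_sq_sum_of_nonneg h0'
    nlinarith [mul_nonneg ha0 (sub_nonneg.mpr hQ),
      mul_le_mul_of_nonneg_left hIH (sub_nonneg.mpr ha1)]

theorem sum_ge_sum_sq_add_two_prod (n : ℕ) (y : Fin n → ℝ)
    (hy : ∀ i, y i ∈ Set.Icc (0 : ℝ) 1)
    (hsum : ∑ i, y i = (n : ℝ) - 1) :
    ∑ i, y i ≥ (∑ i, (y i) ^ 2) + 2 * ∏ i, y i := by
  have key := aux_prod_bound Finset.univ (fun i => 1 - y i)
    (fun i _ => by have := (hy i).2; linarith)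
    (fun i _ => by have := (hy i).1; linarith)
  have hprod : ∏ i, (1 - (1 - y i)) = ∏ i, y i := by simp
  have hs1 : ∑ i : Fin n, (1 - y i) = 1 := by
    rw [Finset.sum_sub_distrib, hsum]; simp
  have hs2 : ∑ i : Fin n, (1 - y i) ^ 2 = (n : ℝ) - 2 * ((n : ℝ) - 1) + ∑ i, (y i) ^ 2 := by
    have : ∀ i : Fin n, (1 - y i) ^ 2 = 1 - 2 * y i + (y i) ^ 2 := fun i => by ring
    rw [Finset.sum_congr rfl fun i _ => this i, Finset.sum_add_distrib,
      Finset.sum_sub_distrib, ← Finset.mul_sum, hsum]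
    simp
  simp only [hprod] at key
  rw [hs1, hs2] at key
  rw [hsum]
  nlinarith [key]
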